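/- Let (X,B) be a resolvable (v,k,λ)-BIBD with r parallel classes, and (Y,C) a 3-(w,k',λ')-design with w = v/k, replication number r' = λ'*C(w-1,2)/C(k'-1,2), and pair index λ'_2 = λ'*(w-2)/(k'-2). If three distinct points x,y,z occur in exactly α blocks of B, then the number of blocks of the constructed design D containing all of x, y, z equals α*r' + 3(λ-α)*λ'_2 + (r - α - 3(λ-α))*λ'. -/
import Mathlib

lemma my_filter_bind {α β} (p : β → Prop) [DecidablePred p] (s : Multiset α)
    (f : α → Multiset β) :
    (s.bind f).filter p = s.bind (fun a => (f a).filter p) := by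
  induction s using Multiset.induction with
  | empty => simp
  | cons a s ih => simp [Multiset.cons_bind, Multiset.filter_add, ih]



/-- Lemma: if three distinct points occur in exactly α blocks of the resolvable master
BIBD, then they occur in α*r' + 3(λ-α)*λ'_2 + (r-α-3(λ-α))*λ' blocks of the design
constructed with a 3-(w,k',λ')-design as indexing design. -/
theorem stmt_6 {X : Type*} [Fintype X] [DecidableEq X]
    (v k lam r w k' lam' r' lam2' α : ℕ)
    (hk : 2 ≤ k) (hkv : k < v) (hX : Fintype.card X = v) (hvw : v = k * w)
    (B : Fin r → Fin w → Finset X)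
    (hsize : ∀ i j, (B i j).card = k)
    (hpc : ∀ (i : Fin r) (x : X), ∃! j : Fin w, x ∈ B i j)
    (hpair : ∀ x y : X, x ≠ y →
      (Finset.univ.filter (fun p : Fin r × Fin w => x ∈ B p.1 p.2 ∧ y ∈ B p.1 p.2)).card = lam)
    (C : Multiset (Finset (Fin w)))
    (hk'3 : 3 ≤ k') (hk'w : k' < w)
    (hCsize : ∀ c ∈ C, c.card = k')
    (hC3 : ∀ T : Finset (Fin w), T.card = 3 →
      Multiset.card (C.filter (fun c => T ⊆ c)) = lam')
    (hCrep : ∀ a : Fin w, Multiset.card (C.filter (fun c => a ∈ c)) = r')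
    (hr' : r' * ((k' - 1).choose 2) = lam' * ((w - 1).choose 2))
    (hCpair : ∀ a b : Fin w, a ≠ b →
      Multiset.card (C.filter (fun c => a ∈ c ∧ b ∈ c)) = lam2')
    (hlam2' : lam2' * (k' - 2) = lam' * (w - 2))
    (x y z : X) (hxy : x ≠ y) (hxz : x ≠ z) (hyz : y ≠ z)
    (hα : (Finset.univ.filter (fun p : Fin r × Fin w =>
            x ∈ B p.1 p.2 ∧ y ∈ B p.1 p.2 ∧ z ∈ B p.1 p.2)).card = α) :
    ∀ D : Multiset (Finset X),
      D = (Finset.univ.val : Multiset (Fin r)).bind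
            (fun i => C.map (fun c => c.biUnion (fun j => B i j))) →
      Multiset.card (D.filter (fun A => x ∈ A ∧ y ∈ A ∧ z ∈ A))
        = α * r' + 3 * (lam - α) * lam2' + (r - α - 3 * (lam - α)) * lam' := by
  classical
  intro D hD
  subst hD
  choose j hjmem hjuniq using hpc
  have memIff : ∀ (i : Fin r) (c : Finset (Fin w)) (p : X),
      p ∈ c.biUnion (fun jj => B i jj) ↔ j i p ∈ c := by
    intro i c p
    simp only [Finset.mem_biUnion]
    constructor
    · rintro ⟨a, ha, hpa⟩; rwa [hjuniq i p a hpa] at ha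
    · intro h; exact ⟨_, h, hjmem i p⟩
  have pairCard : ∀ p q : X,
      (Finset.univ.filter (fun pr : Fin r × Fin w => p ∈ B pr.1 pr.2 ∧ q ∈ B pr.1 pr.2)).card
        = (Finset.univ.filter (fun i : Fin r => j i p = j i q)).card := by
    intro p q
    apply Finset.card_bij' (fun pr _ => pr.1) (fun i _ => (i, j i p))
    · intro pr hpr
      simp only [Finset.mem_filter, Finset.mem_univ, true_and] at hpr ⊢
      rw [← hjuniq pr.1 p pr.2 hpr.1, ← hjuniq pr.1 q pr.2 hpr.2]
    · intro i hi
      simp only [Finset.mem_filter, Finset.mem_univ, true_and] at hi ⊢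
      exact ⟨hjmem i p, hi ▸ hjmem i q⟩
    · intro pr hpr
      simp only [Finset.mem_filter, Finset.mem_univ, true_and] at hpr
      exact Prod.ext rfl ((hjuniq pr.1 p pr.2 hpr.1).symm)
    · intro i hi; rfl
  have tripCard :
      (Finset.univ.filter (fun pr : Fin r × Fin w =>
          x ∈ B pr.1 pr.2 ∧ y ∈ B pr.1 pr.2 ∧ z ∈ B pr.1 pr.2)).card
        = (Finset.univ.filter (fun i : Fin r => j i x = j i y ∧ j i x = j i z)).card := by
    apply Finset.card_bij' (fun pr _ => pr.1) (fun i _ => (i, j i x))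
    · intro pr hpr
      simp only [Finset.mem_filter, Finset.mem_univ, true_and] at hpr ⊢
      constructor
      · rw [← hjuniq pr.1 x pr.2 hpr.1, ← hjuniq pr.1 y pr.2 hpr.2.1]
      · rw [← hjuniq pr.1 x pr.2 hpr.1, ← hjuniq pr.1 z pr.2 hpr.2.2]
    · intro i hi
      simp only [Finset.mem_filter, Finset.mem_univ, true_and] at hi ⊢
      exact ⟨hjmem i x, hi.1 ▸ hjmem i y, hi.2 ▸ hjmem i z⟩
    · intro pr hpr
      simp only [Finset.mem_filter, Finset.mem_univ, true_and] at hpr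
      exact Prod.ext rfl ((hjuniq pr.1 x pr.2 hpr.1).symm)
    · intro i hi; rfl
  -- basic cardinalities
  have hA : (Finset.univ.filter (fun i : Fin r => j i x = j i y ∧ j i x = j i z)).card = α := by
    rw [← tripCard, hα]
  have hXY : (Finset.univ.filter (fun i : Fin r => j i x = j i y)).card = lam := by
    rw [← pairCard, hpair x y hxy]
  have hXZ : (Finset.univ.filter (fun i : Fin r => j i x = j i z)).card = lam := by
    rw [← pairCard, hpair x z hxz]
  have hYZ : (Finset.univ.filter (fun i : Fin r => j i y = j i z)).card = lam := by
    rw [← pairCard, hpair y z hyz]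
  -- reduce LHS to a sum over parallel classes
  set N : Fin r → ℕ := fun i =>
    Multiset.card (C.filter (fun c => j i x ∈ c ∧ j i y ∈ c ∧ j i z ∈ c)) with hN
  have hsum :
      Multiset.card
        (((Finset.univ.val : Multiset (Fin r)).bind
            (fun i => C.map (fun c => c.biUnion (fun jj => B i jj)))).filter
          (fun A => x ∈ A ∧ y ∈ A ∧ z ∈ A))
        = ∑ i : Fin r, N i := by
    rw [my_filter_bind, Multiset.card_bind]
    rw [show (∑ i : Fin r, N i) = ((Finset.univ.val : Multiset (Fin r)).map N).sum from rfl]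
    congr 1
    apply Multiset.map_congr rfl
    intro i _
    simp only [Function.comp]
    rw [Multiset.filter_map, Multiset.card_map]
    congr 1
    apply Multiset.filter_congr
    intro c _
    simp only [Function.comp, memIff]
  rw [hsum]
  -- values of N on the pieces
  have hN0 : ∀ i : Fin r, j i x = j i y → j i x = j i z → N i = r' := by
    intro i h1 h2
    simp only [hN]
    rw [show (C.filter (fun c => j i x ∈ c ∧ j i y ∈ c ∧ j i z ∈ c))
        = C.filter (fun c => j i x ∈ c) from
      Multiset.filter_congr (fun c _ => by rw [← h1, ← h2]; tauto)]
    exact hCrep _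
  have hNxy : ∀ i : Fin r, j i x = j i y → ¬ j i x = j i z → N i = lam2' := by
    intro i h1 h2
    simp only [hN]
    rw [show (C.filter (fun c => j i x ∈ c ∧ j i y ∈ c ∧ j i z ∈ c))
        = C.filter (fun c => j i x ∈ c ∧ j i z ∈ c) from
      Multiset.filter_congr (fun c _ => by rw [← h1]; tauto)]
    exact hCpair _ _ h2
  have hNxz : ∀ i : Fin r, ¬ j i x = j i y → j i x = j i z → N i = lam2' := by
    intro i h1 h2
    simp only [hN]
    rw [show (C.filter (fun c => j i x ∈ c ∧ j i y ∈ c ∧ j i z ∈ c))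
        = C.filter (fun c => j i x ∈ c ∧ j i y ∈ c) from
      Multiset.filter_congr (fun c _ => by rw [← h2]; tauto)]
    exact hCpair _ _ h1
  have hNyz : ∀ i : Fin r, ¬ j i x = j i y → j i y = j i z → N i = lam2' := by
    intro i h1 h2
    simp only [hN]
    rw [show (C.filter (fun c => j i x ∈ c ∧ j i y ∈ c ∧ j i z ∈ c))
        = C.filter (fun c => j i x ∈ c ∧ j i y ∈ c) from
      Multiset.filter_congr (fun c _ => by rw [← h2]; tauto)]
    exact hCpair _ _ h1
  have hN3 : ∀ i : Fin r, ¬ j i x = j i y → ¬ j i x = j i z → ¬ j i y = j i z →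
      N i = lam' := by
    intro i h1 h2 h3
    simp only [hN]
    rw [show (C.filter (fun c => j i x ∈ c ∧ j i y ∈ c ∧ j i z ∈ c))
        = C.filter (fun c => ({j i x, j i y, j i z} : Finset (Fin w)) ⊆ c) from
      Multiset.filter_congr (fun c _ => by
        simp [Finset.insert_subset_iff])]
    apply hC3
    rw [Finset.card_insert_of_notMem (by simp [h1, h2]),
      Finset.card_insert_of_notMem (by simp [h3]), Finset.card_singleton]
  -- split the sum
  -- helper for constant sums
  have sumConst : ∀ (S : Finset (Fin r)) (val : ℕ), (∀ i ∈ S, N i = val) →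
      ∑ i ∈ S, N i = S.card * val := by
    intro S val h
    rw [Finset.sum_congr rfl h, Finset.sum_const, smul_eq_mul]
  -- splits of the index set
  have split1 := Finset.sum_filter_add_sum_filter_not Finset.univ
    (fun i : Fin r => j i x = j i y) N
  have split2 := Finset.sum_filter_add_sum_filter_not
    (Finset.univ.filter (fun i : Fin r => j i x = j i y))
    (fun i : Fin r => j i x = j i z) N
  have split3 := Finset.sum_filter_add_sum_filter_not
    (Finset.univ.filter (fun i : Fin r => ¬ j i x = j i y))
    (fun i : Fin r => j i x = j i z) N
  have split4 := Finset.sum_filter_add_sum_filter_not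
    ((Finset.univ.filter (fun i : Fin r => ¬ j i x = j i y)).filter
      (fun i : Fin r => ¬ j i x = j i z))
    (fun i : Fin r => j i y = j i z) N
  -- card splits
  have csplit1 := Finset.card_filter_add_card_filter_not (s := (Finset.univ : Finset (Fin r)))
    (p := fun i : Fin r => j i x = j i y)
  have csplit2 := Finset.card_filter_add_card_filter_not
    (s := Finset.univ.filter (fun i : Fin r => j i x = j i y))
    (p := fun i : Fin r => j i x = j i z)
  have csplit2' := Finset.card_filter_add_card_filter_not
    (s := Finset.univ.filter (fun i : Fin r => j i x = j i z))
    (p := fun i : Fin r => j i x = j i y)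
  have csplit2'' := Finset.card_filter_add_card_filter_not
    (s := Finset.univ.filter (fun i : Fin r => j i y = j i z))
    (p := fun i : Fin r => j i x = j i y)
  have csplit3 := Finset.card_filter_add_card_filter_not
    (s := Finset.univ.filter (fun i : Fin r => ¬ j i x = j i y))
    (p := fun i : Fin r => j i x = j i z)
  have csplit4 := Finset.card_filter_add_card_filter_not
    (s := (Finset.univ.filter (fun i : Fin r => ¬ j i x = j i y)).filter
      (fun i : Fin r => ¬ j i x = j i z))
    (p := fun i : Fin r => j i y = j i z)
  -- piece cardinalities
  have cA0 : ((Finset.univ.filter (fun i : Fin r => j i x = j i y)).filter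
      (fun i : Fin r => j i x = j i z)).card = α := by
    rw [Finset.filter_filter]; exact hA
  have cA1 : ((Finset.univ.filter (fun i : Fin r => j i x = j i y)).filter
      (fun i : Fin r => ¬ j i x = j i z)).card = lam - α := by
    omega
  have hαlam : α ≤ lam := by omega
  have cBA : ((Finset.univ.filter (fun i : Fin r => j i x = j i z)).filter
      (fun i : Fin r => j i x = j i y)).card = α := by
    rw [Finset.filter_filter, ← hA]
    congr 1
    apply Finset.filter_congr
    intro i _
    tauto
  have cA2 : ((Finset.univ.filter (fun i : Fin r => ¬ j i x = j i y)).filter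
      (fun i : Fin r => j i x = j i z)).card = lam - α := by
    rw [Finset.filter_filter]
    rw [show Finset.univ.filter (fun i : Fin r => ¬ j i x = j i y ∧ j i x = j i z)
        = (Finset.univ.filter (fun i : Fin r => j i x = j i z)).filter
            (fun i : Fin r => ¬ j i x = j i y) from by
      rw [Finset.filter_filter]
      apply Finset.filter_congr
      intro i _
      tauto]
    omega
  have cCA : ((Finset.univ.filter (fun i : Fin r => j i y = j i z)).filter
      (fun i : Fin r => j i x = j i y)).card = α := by
    rw [Finset.filter_filter, ← hA]
    congr 1
    apply Finset.filter_congr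
    intro i _
    constructor
    · rintro ⟨h1, h2⟩; exact ⟨h2, h2.trans h1⟩
    · rintro ⟨h1, h2⟩; exact ⟨h1.symm.trans h2, h1⟩
  have cA3 : (((Finset.univ.filter (fun i : Fin r => ¬ j i x = j i y)).filter
      (fun i : Fin r => ¬ j i x = j i z)).filter (fun i : Fin r => j i y = j i z)).card
      = lam - α := by
    have e3 : (((Finset.univ.filter (fun i : Fin r => ¬ j i x = j i y)).filter
        (fun i : Fin r => ¬ j i x = j i z)).filter (fun i : Fin r => j i y = j i z))
        = (Finset.univ.filter (fun i : Fin r => j i y = j i z)).filter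
            (fun i : Fin r => ¬ j i x = j i y) := by
      simp only [Finset.filter_filter, and_assoc]
      apply Finset.filter_congr
      intro i _
      constructor
      · rintro ⟨h1, _, h3⟩; exact ⟨h3, h1⟩
      · rintro ⟨h3, h1⟩; exact ⟨h1, fun hb => h1 (hb.trans h3.symm), h3⟩
    rw [e3]
    omega
  have cA4 : (((Finset.univ.filter (fun i : Fin r => ¬ j i x = j i y)).filter
      (fun i : Fin r => ¬ j i x = j i z)).filter (fun i : Fin r => ¬ j i y = j i z)).card
      = r - α - 3 * (lam - α) := by
    have hcu : (Finset.univ : Finset (Fin r)).card = r := by simp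
    omega
  -- sums over pieces
  have s0 := sumConst ((Finset.univ.filter (fun i : Fin r => j i x = j i y)).filter
      (fun i : Fin r => j i x = j i z)) r' (fun i hi => by
    simp only [Finset.mem_filter] at hi; exact hN0 i hi.1.2 hi.2)
  have s1 := sumConst ((Finset.univ.filter (fun i : Fin r => j i x = j i y)).filter
      (fun i : Fin r => ¬ j i x = j i z)) lam2' (fun i hi => by
    simp only [Finset.mem_filter] at hi; exact hNxy i hi.1.2 hi.2)
  have s2 := sumConst ((Finset.univ.filter (fun i : Fin r => ¬ j i x = j i y)).filter
      (fun i : Fin r => j i x = j i z)) lam2' (fun i hi => by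
    simp only [Finset.mem_filter] at hi; exact hNxz i hi.1.2 hi.2)
  have s3 := sumConst (((Finset.univ.filter (fun i : Fin r => ¬ j i x = j i y)).filter
      (fun i : Fin r => ¬ j i x = j i z)).filter (fun i : Fin r => j i y = j i z))
      lam2' (fun i hi => by
    simp only [Finset.mem_filter] at hi; exact hNyz i hi.1.1.2 hi.2)
  have s4 := sumConst (((Finset.univ.filter (fun i : Fin r => ¬ j i x = j i y)).filter
      (fun i : Fin r => ¬ j i x = j i z)).filter (fun i : Fin r => ¬ j i y = j i z))
      lam' (fun i hi => by
    simp only [Finset.mem_filter] at hi; exact hN3 i hi.1.1.2 hi.1.2 hi.2)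
  rw [← split1, ← split2, ← split3, ← split4, s0, s1, s2, s3, s4, cA0, cA1, cA2, cA3, cA4]
  set m := lam - α with hm
  set p := r - α - 3 * m with hp
  ring
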